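/- A connected family of maps commuting with f is constant: let f : ℂ^n → ℂ^n be a map such that Per_m(f) is finite for every m ≥ 1 and Per(f) = ⋃_m Per_m(f) is Zariski dense in ℂ^n. Let T be a connected topological space and let ψ : T → (ℂ^n → ℂ^n) assign to each t a polynomial map ψ_t with f ∘ ψ_t = ψ_t ∘ f, such that for each P ∈ ℂ^n the map t ↦ ψ_t(P) is continuous (ℂ^n with its standard topology). Then ψ_s = ψ_t for all s, t ∈ T. -/

import Mathlib

/-- A continuous map from a connected space whose range lies in a finite subset of a
T1 space is constant. -/
lemma const_of_finite_range {T : Type*} [TopologicalSpace T] [ConnectedSpace T]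
    {α : Type*} [TopologicalSpace α] [T1Space α] (g : T → α) (hg : Continuous g)
    (S : Set α) (hS : S.Finite) (hmem : ∀ t, g t ∈ S) (s t : T) : g s = g t := by
  set U : Set T := {u | g u = g s} with hU
  have hclosed : IsClosed U := isClosed_singleton.preimage hg
  have hopen : IsOpen U := by
    have : U = g ⁻¹' ((S \ {g s})ᶜ) := by
      ext u
      simp only [hU, Set.mem_setOf_eq, Set.mem_preimage, Set.mem_compl_iff,
        Set.mem_diff, Set.mem_singleton_iff]
      constructor
      · rintro h ⟨_, hne⟩; exact hne h
      · intro h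
        by_contra hne
        exact h ⟨hmem u, hne⟩
    rw [this]
    exact ((hS.subset (Set.diff_subset)).isClosed.isOpen_compl).preimage hg
  have : U = Set.univ := by
    rcases isClopen_iff.mp ⟨hclosed, hopen⟩ with h | h
    · exact absurd (by simp [hU] : s ∈ U) (by simp [h])
    · exact h
  have := this ▸ Set.mem_univ t
  exact (this : g t = g s).symm

/-- A connected family of polynomial maps commuting with `f` is constant: if every
`Per_m(f)` is finite and `Per(f)` is Zariski dense, `T` is a connected topological space,
and `ψ : T → (ℂ^n → ℂ^n)` is a family of polynomial maps commuting with `f` such that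
`t ↦ ψ t P` is continuous for every `P`, then all the `ψ t` coincide. -/
theorem connected_family_constant {n : ℕ} (f : (Fin n → ℂ) → (Fin n → ℂ))
    (hfin : ∀ m : ℕ, 1 ≤ m → {P : Fin n → ℂ | f^[m] P = P}.Finite)
    (hdense : ∀ q : MvPolynomial (Fin n) ℂ,
      (∀ P : Fin n → ℂ, (∃ m : ℕ, 1 ≤ m ∧ f^[m] P = P) → MvPolynomial.eval P q = 0) →
        q = 0)
    (T : Type*) [TopologicalSpace T] [ConnectedSpace T]
    (ψ : T → (Fin n → ℂ) → (Fin n → ℂ))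
    (hpoly : ∀ t : T, ∃ p : Fin n → MvPolynomial (Fin n) ℂ,
      ∀ (x : Fin n → ℂ) (i : Fin n), ψ t x i = MvPolynomial.eval x (p i))
    (hcomm : ∀ t : T, f ∘ ψ t = ψ t ∘ f)
    (hcont : ∀ P : Fin n → ℂ, Continuous fun t => ψ t P) :
    ∀ s t : T, ψ s = ψ t := by
  intro s t
  -- On every periodic point, ψ s and ψ t agree.
  have hper : ∀ P : Fin n → ℂ, (∃ m : ℕ, 1 ≤ m ∧ f^[m] P = P) → ψ s P = ψ t P := by
    rintro P ⟨m, hm, hP⟩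
    apply const_of_finite_range (fun u => ψ u P) (hcont P)
      {Q : Fin n → ℂ | f^[m] Q = Q} (hfin m hm)
    intro u
    have hc : Function.Commute f (ψ u) := fun x => congrFun (hcomm u) x
    have := (hc.iterate_left m) P
    try simp only [Function.comp_apply] at this
    show f^[m] (ψ u P) = ψ u P
    rw [this, hP]
  obtain ⟨ps, hps⟩ := hpoly s
  obtain ⟨pt, hpt⟩ := hpoly t
  have hpq : ∀ i : Fin n, ps i = pt i := by
    intro i
    have h0 : ps i - pt i = 0 := by
      apply hdense
      intro P hP
      have := hper P hP
      have hi : ψ s P i = ψ t P i := by rw [this]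
      rw [hps P i, hpt P i] at hi
      simp [hi]
    exact sub_eq_zero.mp h0
  funext x
  funext i
  rw [hps x i, hpt x i, hpq i]
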